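/- arXiv:1912.03101 — 6 statements merged into one kernel-verified Lean document; each statement's English description precedes it below -/
import Mathlib

section
/- (Chan–Lam) Let n and i be natural numbers with 2i ≤ n. For each j with 0 ≤ j ≤ i, let σ_j be the permutation of {0,1,…,n−1} that is the product of the j disjoint transpositions (2t, 2t+1) for t = 0,…,j−1 (so σ_j has cycle type 2^j 1^{n−2j}, and σ_0 is the identity). Then for every irreducible finite-dimensional complex representation of the symmetric group S_n with character χ, there exists a natural number m such that Σ_{j=0}^{i} C(i,j) · χ(σ_j) = 2^i · m. In particular this sum is a non-negative integer divisible by 2^i. -/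
open CategoryTheory

/-- The transposition `(2t, 2t+1)` of `{0, 1, …, n−1}` (the identity if `2t+1 ≥ n`). -/
def tau (n t : ℕ) : Equiv.Perm (Fin n) :=
  if h : 2 * t + 1 < n then Equiv.swap ⟨2 * t, by omega⟩ ⟨2 * t + 1, h⟩ else 1

/-- The permutation `σ_j = (0 1)(2 3)⋯(2j−2 2j−1)` of `{0, 1, …, n−1}`,
a product of `j` disjoint transpositions. -/
def sigma (n j : ℕ) : Equiv.Perm (Fin n) :=
  ((List.range j).map (tau n)).prod

/-- Product of the transpositions indexed by a list. -/
def tauProd (n : ℕ) (l : List ℕ) : Equiv.Perm (Fin n) :=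
  (l.map (tau n)).prod

lemma sigma_eq_tauProd (n j : ℕ) : sigma n j = tauProd n (List.range j) := rfl

/-- Two of our transpositions with distinct indices are disjoint. -/
lemma tau_disjoint (n : ℕ) {s t : ℕ} (hst : s ≠ t) :
    Equiv.Perm.Disjoint (tau n s) (tau n t) := by
  unfold tau
  split_ifs with h1 h2 h2
  · intro x
    by_cases hx : (x : ℕ) = 2 * t ∨ (x : ℕ) = 2 * t + 1
    · left
      apply Equiv.swap_apply_of_ne_of_ne <;>
        · intro hc
          apply_fun (Fin.val) at hc
          simp only [Fin.val_mk] at hc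
          omega
    · right
      push_neg at hx
      apply Equiv.swap_apply_of_ne_of_ne <;>
        · intro hc
          apply_fun (Fin.val) at hc
          simp only [Fin.val_mk] at hc
          omega
  · intro x; right; rfl
  · intro x; left; rfl
  · intro x; left; rfl

lemma tau_isCycle (n t : ℕ) (h : 2 * t + 1 < n) : (tau n t).IsCycle := by
  unfold tau
  rw [dif_pos h]
  apply Equiv.Perm.isCycle_swap
  intro hc
  apply_fun (Fin.val) at hc
  simp only [Fin.val_mk] at hc
  omega

lemma tau_card_support (n t : ℕ) (h : 2 * t + 1 < n) : (tau n t).support.card = 2 := by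
  unfold tau
  rw [dif_pos h]
  apply Equiv.Perm.card_support_swap
  intro hc
  apply_fun (Fin.val) at hc
  simp only [Fin.val_mk] at hc
  omega

/-- Cycle type of a product of distinct transpositions. -/
lemma tauProd_cycleType (n : ℕ) (l : List ℕ) (hne : l.Pairwise (· ≠ ·))
    (hlt : ∀ t ∈ l, 2 * t + 1 < n) :
    (tauProd n l).cycleType = Multiset.replicate l.length 2 := by
  have h := Equiv.Perm.cycleType_eq (σ := tauProd n l) (l.map (tau n)) rfl
    (by
      intro σ hσ
      rw [List.mem_map] at hσ
      obtain ⟨t, ht, rfl⟩ := hσ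
      exact tau_isCycle n t (hlt t ht))
    (by
      rw [List.pairwise_map]
      exact hne.imp fun h => tau_disjoint n h)
  rw [h, List.map_map]
  rw [Multiset.eq_replicate]
  constructor
  · simp
  · intro b hb
    rw [Multiset.mem_coe, List.mem_map] at hb
    obtain ⟨t, ht, rfl⟩ := hb
    exact tau_card_support n t (hlt t ht)

/-- Characters are invariant under conjugation, so `χ(tauProd l) = χ(σ_{l.length})`. -/
lemma char_tauProd (n : ℕ) (V : FDRep ℂ (Equiv.Perm (Fin n))) (l : List ℕ)
    (hne : l.Pairwise (· ≠ ·)) (hlt : ∀ t ∈ l, 2 * t + 1 < n)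
    (hlen : ∀ t < l.length, 2 * t + 1 < n) :
    V.character (tauProd n l) = V.character (sigma n l.length) := by
  have hconj : IsConj (tauProd n l) (sigma n l.length) := by
    rw [Equiv.Perm.isConj_iff_cycleType_eq]
    rw [tauProd_cycleType n l hne hlt, sigma_eq_tauProd,
      tauProd_cycleType n (List.range l.length)
        (List.pairwise_lt_range (n := _) |>.imp ne_of_lt)
        (by
          intro t ht
          rw [List.mem_range] at ht
          exact hlen t ht),
      List.length_range]
  obtain ⟨c, hc⟩ := isConj_iff.mp hconj
  calc V.character (tauProd n l) = V.character (c * tauProd n l * c⁻¹) := by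
        rw [mul_assoc, FDRep.char_mul_comm, mul_assoc, inv_mul_cancel, mul_one]
      _ = V.character (sigma n l.length) := by rw [hc]

/-- Summing a function of the length over all sublists gives a binomial-weighted sum. -/
lemma sum_sublists' {α : Type*} {M : Type*} [AddCommMonoid M] :
    ∀ (l : List α) (F : ℕ → M),
      ((l.sublists').map (fun s => F s.length)).sum
        = ∑ j ∈ Finset.range (l.length + 1), l.length.choose j • F j
  | [], F => by simp
  | a :: l, F => by
      rw [List.sublists'_cons, List.map_append, List.sum_append, List.map_map]
      have h2' : ((l.sublists'.map (List.cons a)).map fun s => F s.length)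
          = l.sublists'.map (fun s => F (s.length + 1)) := by
        rw [List.map_map]
        rfl
      rw [List.map_map] at h2'
      rw [h2', sum_sublists' l F, sum_sublists' l (fun j => F (j + 1))]
      set k := l.length with hk
      have hlen : (a :: l).length = k + 1 := rfl
      rw [hlen]
      rw [Finset.sum_range_succ' (fun j => (k + 1).choose j • F j) (k + 1)]
      have hpascal : ∀ j, (k + 1).choose (j + 1) • F (j + 1)
          = k.choose j • F (j + 1) + k.choose (j + 1) • F (j + 1) := by
        intro j
        rw [Nat.choose_succ_succ, add_smul]
      rw [Finset.sum_congr rfl (fun j _ => hpascal j), Finset.sum_add_distrib]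
      have hshift : ∑ j ∈ Finset.range (k + 1), k.choose (j + 1) • F (j + 1)
          = ∑ j ∈ Finset.range k, k.choose (j + 1) • F (j + 1) := by
        rw [Finset.sum_range_succ, Nat.choose_succ_self, zero_smul, add_zero]
      have hfirst : ∑ j ∈ Finset.range (k + 1), k.choose j • F j
          = (∑ j ∈ Finset.range k, k.choose (j + 1) • F (j + 1)) + F 0 := by
        rw [Finset.sum_range_succ' (fun j => k.choose j • F j) k]
        simp
      rw [hshift, hfirst]
      simp only [Nat.choose_zero_right, one_smul]
      abel

/-- Expansion of a product `∏ (1 + ρ(f t))` as a sum over sublists. -/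
lemma expand_prod {G : Type*} {R : Type*} {α : Type*} [Monoid G] [Ring R]
    (ρ : G →* R) (f : α → G) :
    ∀ l : List α,
      ((l.map (fun t => (1 : R) + ρ (f t))).prod)
        = ((l.sublists').map (fun s => ρ ((s.map f).prod))).sum
  | [] => by simp
  | a :: l => by
      rw [List.map_cons, List.prod_cons, expand_prod ρ f l, List.sublists'_cons,
        List.map_append, List.sum_append, List.map_map]
      have h2' : (l.sublists'.map ((fun s => ρ ((s.map f).prod)) ∘ List.cons a))
          = l.sublists'.map (fun s => ρ (f a) * ρ ((s.map f).prod)) := by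
        apply List.map_congr_left
        intro s _
        simp [Function.comp, map_mul]
      rw [h2', add_mul, one_mul, List.sum_map_mul_left]

/-- A product of pairwise-commuting elements each squaring to twice themselves squares
to `2 ^ length` times itself. -/
lemma sq_prod_list {R : Type*} [Ring R] [Module ℂ R] [IsScalarTower ℂ R R]
    [SMulCommClass ℂ R R] {α : Type*} (g : α → R) :
    ∀ l : List α, (∀ t ∈ l, g t * g t = (2 : ℂ) • g t) →
      l.Pairwise (fun s t => Commute (g s) (g t)) →
      (l.map g).prod * (l.map g).prod = ((2 : ℂ) ^ l.length) • (l.map g).prod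
  | [], _, _ => by simp
  | a :: l, hsq, hcomm => by
      rw [List.pairwise_cons] at hcomm
      have hP := sq_prod_list g l (fun t ht => hsq t (List.mem_cons_of_mem a ht)) hcomm.2
      set P := (l.map g).prod with hPdef
      have hac : Commute (g a) P := by
        apply Commute.list_prod_right
        intro x hx
        rw [List.mem_map] at hx
        obtain ⟨t, ht, rfl⟩ := hx
        exact hcomm.1 t ht
      rw [List.map_cons, List.prod_cons, List.length_cons]
      calc g a * P * (g a * P) = g a * (P * (g a * P)) := by rw [mul_assoc]
        _ = g a * (P * g a * P) := by rw [mul_assoc]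
        _ = g a * (g a * P * P) := by rw [hac.eq]
        _ = g a * g a * (P * P) := by noncomm_ring
        _ = ((2 : ℂ) • g a) * (((2 : ℂ) ^ l.length) • P) := by
            rw [hsq a (List.mem_cons_self (a := a) (l := l)), hP]
        _ = (2 : ℂ) ^ (l.length + 1) • (g a * P) := by
            rw [smul_mul_assoc, mul_smul_comm, smul_smul, pow_succ, mul_comm]

lemma tau_commute (n : ℕ) (s t : ℕ) : Commute (tau n s) (tau n t) := by
  rcases eq_or_ne s t with rfl | h
  · rfl
  · exact (tau_disjoint n h).commute

lemma tau_mul_self (n t : ℕ) : tau n t * tau n t = 1 := by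
  unfold tau
  split_ifs with h
  · exact Equiv.swap_mul_self _ _
  · exact one_mul 1

/-- (Chan–Lam) For `2i ≤ n` and any irreducible finite-dimensional complex representation of
`S_n` with character `χ`, the quantity `∑_{j=0}^{i} C(i,j) · χ(σ_j)` is `2^i` times a
non-negative integer. -/
theorem chan_lam_irreducible (n i : ℕ) (hi : 2 * i ≤ n)
    (V : FDRep ℂ (Equiv.Perm (Fin n))) [Simple V] :
    ∃ m : ℕ, ∑ j ∈ Finset.range (i + 1),
        (i.choose j : ℂ) * V.character (sigma n j) = 2 ^ i * (m : ℂ) := by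
  classical
  set A : ℕ → (Module.End ℂ V) := fun t => V.ρ (tau n t) with hA
  set g : ℕ → (Module.End ℂ V) := fun t => 1 + A t with hg
  set P : Module.End ℂ V := ((List.range i).map g).prod with hP
  -- step 1: the character sum equals the trace of P
  have step1 : ∑ j ∈ Finset.range (i + 1),
      (i.choose j : ℂ) * V.character (sigma n j) = LinearMap.trace ℂ V P := by
    have hexp := expand_prod (R := Module.End ℂ V) V.ρ (tau n) (List.range i)
    have htr : LinearMap.trace ℂ V P
        = (((List.range i).sublists').map
            (fun s => V.character (tauProd n s))).sum := by
      rw [hP, hexp, map_list_sum, List.map_map]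
      rfl
    have hchar : (((List.range i).sublists').map
          (fun s => V.character (tauProd n s))).sum
        = (((List.range i).sublists').map
            (fun s => V.character (sigma n s.length))).sum := by
      congr 1
      apply List.map_congr_left
      intro s hs
      rw [List.mem_sublists'] at hs
      have hsub : ∀ t ∈ s, t < i := fun t ht => List.mem_range.mp (hs.subset ht)
      have hlen : s.length ≤ i := by
        have := hs.length_le
        simpa using this
      exact char_tauProd n V s
        ((List.pairwise_lt_range (n := i)).sublist hs |>.imp ne_of_lt)
        (fun t ht => by have := hsub t ht; omega)
        (fun t ht => by omega)
    have hcount := sum_sublists' (List.range i) (fun j => V.character (sigma n j))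
    rw [List.length_range] at hcount
    rw [htr, hchar, hcount]
    apply Finset.sum_congr rfl
    intro j _
    rw [nsmul_eq_mul]
  -- step 2: P squares to 2^i • P
  have hsq : P * P = ((2 : ℂ) ^ i) • P := by
    rw [hP]
    have := sq_prod_list g (List.range i)
      (fun t _ => by
        have hA2 : A t * A t = 1 := by
          show V.ρ (tau n t) * V.ρ (tau n t) = 1
          rw [← map_mul, tau_mul_self, map_one]
        show (1 + V.ρ (tau n t)) * (1 + V.ρ (tau n t)) = (2 : ℂ) • (1 + V.ρ (tau n t))
        rw [two_smul, add_mul, mul_add, mul_add, hA2]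
        simp only [one_mul, mul_one]
        abel)
      (List.pairwise_lt_range (n := i) |>.imp (fun {s t} _ => by
        have hc : Commute (A s) (A t) := (tau_commute n s t).map V.ρ
        show Commute (1 + V.ρ (tau n s)) (1 + V.ρ (tau n t))
        exact Commute.add_right (Commute.one_right _)
          (Commute.add_left (Commute.one_left _) hc)))
    rw [List.length_range] at this
    exact this
  -- step 3: Q = 2⁻¹^i • P is an idempotent, so its trace is a natural number
  set Q : Module.End ℂ V := ((2 : ℂ)⁻¹ ^ i) • P with hQ
  have hQidem : Q * Q = Q := by
    rw [hQ, smul_mul_assoc, mul_smul_comm, hsq, smul_smul, smul_smul]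
    congr 1
    rw [mul_assoc, ← mul_pow]
    norm_num
  obtain ⟨p, hp⟩ := (LinearMap.isProj_iff_isIdempotentElem Q).mpr
    (by exact hQidem)
  refine ⟨Module.finrank ℂ p, ?_⟩
  have hPQ : P = ((2 : ℂ) ^ i) • Q := by
    rw [hQ, smul_smul, ← mul_pow]
    norm_num
  rw [step1, hPQ, map_smul, hp.trace, smul_eq_mul]
end

section
/- Let G be a simple graph on a finite vertex set V that is acyclic (a forest), and let L be its Laplacian matrix (L_{v,v} = deg(v), and for u ≠ v, L_{u,v} = −1 if uv is an edge of G and 0 otherwise). If ψ is a permutation of V for which there exists a vertex v with ψ(v) ≠ v and ψ(ψ(v)) ≠ v (i.e., ψ has a cycle of length at least 3), then ∏_{u ∈ V} L_{u, ψ(u)} = 0. -/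
/-- If `G` is a forest and the permutation `ψ` of the vertices has a cycle of length at least 3,
then the product `∏_u L_{u, ψ(u)}` of Laplacian entries vanishes. -/
theorem lapMatrix_prod_eq_zero_of_long_cycle {V : Type} [Fintype V] [DecidableEq V]
    (G : SimpleGraph V) [DecidableRel G.Adj] (hG : G.IsAcyclic)
    (ψ : Equiv.Perm V) (v : V) (h1 : ψ v ≠ v) (h2 : ψ (ψ v) ≠ v) :
    ∏ u, G.lapMatrix ℝ u (ψ u) = 0 := by
  by_contra hprod
  -- every factor is nonzero, hence moved points are adjacent to their images
  have key : ∀ u : V, ψ u ≠ u → G.Adj u (ψ u) := by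
    intro u hu
    have hne : G.lapMatrix ℝ u (ψ u) ≠ 0 :=
      fun h0 => hprod (Finset.prod_eq_zero (Finset.mem_univ u) h0)
    by_contra hadj
    exact hne (by
      simp [SimpleGraph.lapMatrix, Matrix.sub_apply, SimpleGraph.degMatrix,
        SimpleGraph.adjMatrix, Ne.symm hu, hadj])
  -- minimal period of v under ψ
  have hex : ∃ k, 0 < k ∧ (ψ ^ k) v = v := by
    refine ⟨orderOf ψ, orderOf_pos ψ, ?_⟩
    rw [pow_orderOf_eq_one]; rfl
  set m := Nat.find hex with hmdef
  obtain ⟨hmpos, hmv⟩ := Nat.find_spec hex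
  have hmin : ∀ k, 0 < k → k < m → (ψ ^ k) v ≠ v := by
    intro k hk hkm hkv
    exact Nat.find_min hex hkm ⟨hk, hkv⟩
  -- adjacency along the orbit
  have hAdj : ∀ k : ℕ, G.Adj ((ψ ^ k) v) ((ψ ^ (k + 1)) v) := by
    intro k
    have hne : ψ ((ψ ^ k) v) ≠ (ψ ^ k) v := by
      have : (ψ ^ k) (ψ v) ≠ (ψ ^ k) v := (Equiv.injective _).ne h1
      simpa [← Equiv.Perm.mul_apply, ← pow_succ, ← pow_succ'] using this
    have := key _ hne
    have heq : ψ ((ψ ^ k) v) = (ψ ^ (k + 1)) v := by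
      rw [pow_succ', Equiv.Perm.mul_apply]
    rwa [heq] at this
  have hAdjv : G.Adj v (ψ v) := key v h1
  -- the edge v -- ψ v is a bridge
  have hbridge := (SimpleGraph.isAcyclic_iff_forall_adj_isBridge.mp hG) hAdjv
  rw [SimpleGraph.isBridge_iff] at hbridge
  apply hbridge
  -- build a walk from v to ψ v in G minus the edge, through the orbit
  have claim : ∀ d k : ℕ, k + d = m → 1 ≤ k →
      (G \ SimpleGraph.fromEdgeSet {s(v, ψ v)}).Reachable ((ψ ^ k) v) v := by
    intro d
    induction d with
    | zero =>
      intro k hk _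
      rw [Nat.add_zero] at hk
      subst hk
      rw [hmv]
    | succ d ih =>
      intro k hk hk1
      have hkm : k < m := by omega
      have hstep : (G \ SimpleGraph.fromEdgeSet {s(v, ψ v)}).Adj
          ((ψ ^ k) v) ((ψ ^ (k + 1)) v) := by
        rw [SimpleGraph.sdiff_adj, SimpleGraph.fromEdgeSet_adj]
        refine ⟨hAdj k, ?_⟩
        rintro ⟨hmem, -⟩
        rw [Set.mem_singleton_iff, Sym2.eq_iff] at hmem
        rcases hmem with ⟨ha, hb⟩ | ⟨ha, hb⟩
        · exact hmin k hk1 hkm ha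
        · -- ψ^k v = ψ v and ψ^(k+1) v = v ⇒ ψ^(k+1) v = ψ² v ⇒ ψ² v = v
          apply h2
          have : (ψ ^ (k + 1)) v = ψ (ψ v) := by
            rw [pow_succ', Equiv.Perm.mul_apply, ha]
          rw [hb] at this
          exact this.symm
      exact hstep.reachable.trans (ih (k + 1) (by omega) (by omega))
  have := claim (m - 1) 1 (by omega) le_rfl
  rw [pow_one] at this
  exact this.symm
end

section
/- Let G be a simple graph on a finite vertex set V that is acyclic (a forest), let q be a real number, and let 𝓛^q = I + q²(D − I) − qA be its q-Laplacian (so 𝓛^q_{v,v} = 1 + q²(deg(v) − 1), and for u ≠ v, 𝓛^q_{u,v} = −q if uv is an edge of G and 0 otherwise). If ψ is a permutation of V for which there exists a vertex v with ψ(v) ≠ v and ψ(ψ(v)) ≠ v (i.e., ψ has a cycle of length at least 3), then ∏_{u ∈ V} 𝓛^q_{u, ψ(u)} = 0. -/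
/-- The `q`-Laplacian `𝓛^q = I + q²(D − I) − qA` of a simple graph `G`. -/
def qLap {V : Type} [Fintype V] [DecidableEq V] (G : SimpleGraph V) [DecidableRel G.Adj]
    (q : ℝ) : Matrix V V ℝ :=
  1 + q ^ 2 • (G.degMatrix ℝ - 1) - q • G.adjMatrix ℝ

lemma qLap_off_diag {V : Type} [Fintype V] [DecidableEq V] (G : SimpleGraph V)
    [DecidableRel G.Adj] (q : ℝ) {u w : V} (h : u ≠ w) :
    qLap G q u w = -(q * (if G.Adj u w then 1 else 0)) := by
  simp [qLap, Matrix.add_apply, Matrix.sub_apply, Matrix.smul_apply, Matrix.one_apply_ne h,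
    SimpleGraph.degMatrix, Matrix.diagonal_apply_ne _ h]

/-- If `G` is a forest and the permutation `ψ` of the vertices has a cycle of length at least 3,
then the product `∏_u 𝓛^q_{u, ψ(u)}` of `q`-Laplacian entries vanishes. -/
theorem qLap_prod_eq_zero_of_long_cycle {V : Type} [Fintype V] [DecidableEq V]
    (G : SimpleGraph V) [DecidableRel G.Adj] (hG : G.IsAcyclic) (q : ℝ)
    (ψ : Equiv.Perm V) (v : V) (h1 : ψ v ≠ v) (h2 : ψ (ψ v) ≠ v) :
    ∏ u, qLap G q u (ψ u) = 0 := by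
  -- reduce to: every non-fixed u is adjacent to ψ u, and q ≠ 0
  by_cases hq : q = 0
  · apply Finset.prod_eq_zero (Finset.mem_univ v)
    rw [qLap_off_diag G q (Ne.symm h1), hq]; ring
  by_cases hadj : ∀ u : V, ψ u ≠ u → G.Adj u (ψ u)
  swap
  · push_neg at hadj
    obtain ⟨u, hu, hna⟩ := hadj
    apply Finset.prod_eq_zero (Finset.mem_univ u)
    rw [qLap_off_diag G q (Ne.symm hu), if_neg hna]; ring
  exfalso
  -- now derive a contradiction with acyclicity
  set f : V → V := ⇑ψ with hf
  have hinj : Function.Injective f := ψ.injective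
  have hfix : ∀ k : ℕ, f (f^[k] v) ≠ f^[k] v := by
    intro k h
    apply h1
    have : f^[k] (f v) = f^[k] v := by
      rw [← Function.iterate_succ_apply, Function.iterate_succ_apply']
      exact h
    exact hinj.iterate k this
  have hadj' : ∀ k : ℕ, G.Adj (f^[k] v) (f^[k+1] v) := by
    intro k
    rw [Function.iterate_succ_apply']
    exact hadj _ (hfix k)
  -- minimal period
  have hper : v ∈ Function.periodicPts f := by
    refine ⟨orderOf ψ, orderOf_pos ψ, ?_⟩
    show f^[orderOf ψ] v = v
    rw [hf, Equiv.Perm.iterate_eq_pow, pow_orderOf_eq_one]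
    simp
  set n := Function.minimalPeriod f v with hn
  have hnpos : 0 < n := Function.minimalPeriod_pos_of_mem_periodicPts hper
  have hfn : f^[n] v = v := Function.isPeriodicPt_minimalPeriod f v
  have hlt : ∀ k, 0 < k → k < n → f^[k] v ≠ v := by
    intro k hk0 hkn h
    have := Function.IsPeriodicPt.minimalPeriod_dvd (f := f) (x := v) h
    have := Nat.le_of_dvd hk0 this
    omega
  have hn1 : n ≠ 1 := by
    intro h
    apply h1
    have := hfn
    rw [h] at this
    simpa using this
  have hn2 : n ≠ 2 := by
    intro h
    apply h2
    have := hfn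
    rw [h] at this
    simpa [Function.iterate_succ_apply'] using this
  have hn3 : 3 ≤ n := by omega
  -- the bad edge
  have hA : G.Adj v (f v) := by simpa using hadj' 0
  -- walks avoiding the edge
  have key : ∀ k : ℕ, k + 1 ≤ n →
      ∃ p : G.Walk (f v) (f^[k+1] v), s(v, f v) ∉ p.edges := by
    intro k
    induction k with
    | zero => intro _; exact ⟨SimpleGraph.Walk.nil, by simp⟩
    | succ k ih =>
      intro hk
      obtain ⟨p, hp⟩ := ih (by omega)
      refine ⟨p.concat (hadj' (k+1)), ?_⟩
      rw [SimpleGraph.Walk.edges_concat]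
      simp only [List.concat_eq_append, List.mem_append, List.mem_singleton]
      push_neg
      refine ⟨hp, ?_⟩
      intro h
      rw [Sym2.eq_iff] at h
      rcases h with ⟨ha, hb⟩ | ⟨ha, hb⟩
      · exact hlt (k+1) (by omega) (by omega) ha.symm
      · -- v = f^[k+2] v and f v = f^[k+1] v
        have hk2 : k + 2 = n := by
          by_contra h
          exact hlt (k+2) (by omega) (by omega) ha.symm
        have : f^[k] v = v := by
          have h' : f^[k+1] v = f v := hb.symm
          rw [Function.iterate_succ_apply'] at h'
          exact hinj h'
        rcases Nat.eq_zero_or_pos k with h0 | hpos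
        · omega
        · exact hlt k hpos (by omega) this
  obtain ⟨p, hp⟩ := key (n - 1) (by omega)
  have hn' : f^[n - 1 + 1] v = v := by rw [show n - 1 + 1 = n by omega]; exact hfn
  let p' : G.Walk (f v) v := p.copy rfl hn'
  have hb := (SimpleGraph.isAcyclic_iff_forall_adj_isBridge.mp hG) hA
  rw [SimpleGraph.isBridge_iff_adj_and_forall_walk_mem_edges] at hb
  have hmem := hb p'.reverse
  rw [SimpleGraph.Walk.edges_reverse, List.mem_reverse] at hmem
  exact hp (by rw [SimpleGraph.Walk.edges_copy] at hmem; exact hmem)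
end

section
/- Let G be a simple graph on a finite vertex set V that is acyclic (a forest), let q be a real number, and let 𝓛^q = I + q²(D − I) − qA be its q-Laplacian. Then for every function f from the permutations of V to the complex numbers, Σ_{ψ ∈ Sym(V)} f(ψ) · ∏_{v ∈ V} 𝓛^q_{v, ψ(v)} = Σ_{ψ ∈ M} f(ψ) · q^{s(ψ)} · ∏_{v : ψ(v) = v} (1 + q²(deg(v) − 1)), where M is the set of involutions ψ of V (ψ ∘ ψ = id) all of whose 2-cycles {v, ψ(v)} are edges of G, and s(ψ) = |{v ∈ V : ψ(v) ≠ v}|. (The real matrix entries are regarded as complex numbers.) -/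
section helpers
variable {V : Type} [Fintype V] [DecidableEq V]

lemma qLap_diag (G : SimpleGraph V) [DecidableRel G.Adj] (q : ℝ) (v : V) :
    qLap G q v v = 1 + q ^ 2 * ((G.degree v : ℝ) - 1) := by
  simp [qLap, SimpleGraph.degMatrix, Matrix.sub_apply, Matrix.add_apply, Matrix.one_apply,
    Matrix.smul_apply, Matrix.diagonal_apply_eq]

lemma qLap_offdiag (G : SimpleGraph V) [DecidableRel G.Adj] (q : ℝ) {v w : V} (h : v ≠ w) :
    qLap G q v w = if G.Adj v w then -q else 0 := by
  simp [qLap, SimpleGraph.degMatrix, Matrix.sub_apply, Matrix.add_apply, Matrix.one_apply_ne h,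
    Matrix.smul_apply, Matrix.diagonal_apply_ne _ h, SimpleGraph.adjMatrix_apply]
  split <;> simp

variable {G : SimpleGraph V}

lemma forest_invol (hG : G.IsAcyclic) (ψ : Equiv.Perm V)
    (hadj : ∀ v, ψ v ≠ v → G.Adj v (ψ v)) : ψ * ψ = 1 := by
  by_contra hne
  obtain ⟨v, hv⟩ : ∃ v, ψ (ψ v) ≠ v := by
    by_contra h
    push_neg at h
    exact hne (Equiv.ext fun x => by simpa using h x)
  have hv1 : ψ v ≠ v := fun h => hv (by rw [h, h])
  -- every iterate of v is moved
  have hmoved : ∀ i : ℕ, ψ ((ψ ^ i) v) ≠ (ψ ^ i) v := by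
    intro i h
    apply hv1
    have h2 : (ψ ^ i) (ψ v) = (ψ ^ i) v := by
      rw [← Equiv.Perm.mul_apply, ← pow_succ, pow_succ', Equiv.Perm.mul_apply, h]
    exact (ψ ^ i).injective h2
  have hadj' : ∀ i : ℕ, G.Adj ((ψ ^ i) v) ((ψ ^ (i + 1)) v) := by
    intro i
    have := hadj _ (hmoved i)
    rwa [show ψ ((ψ ^ i) v) = (ψ ^ (i + 1)) v from by rw [pow_succ']; rfl] at this
  -- minimal period
  set k := Function.minimalPeriod ψ v with hk
  have hper : Function.IsPeriodicPt ψ (orderOf ψ) v := by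
    rw [Function.IsPeriodicPt, Function.IsFixedPt, Equiv.Perm.iterate_eq_pow,
      pow_orderOf_eq_one]; rfl
  have hkpos : 0 < k := hper.minimalPeriod_pos (orderOf_pos ψ)
  have hkper : (ψ ^ k) v = v := by
    have := Function.isPeriodicPt_minimalPeriod ψ v
    rwa [Function.IsPeriodicPt, Function.IsFixedPt, Equiv.Perm.iterate_eq_pow] at this
  have hinj : ∀ i j, i < k → j < k → (ψ ^ i) v = (ψ ^ j) v → i = j := by
    intro i j hi hj h
    exact Function.iterate_injOn_Iio_minimalPeriod hi hj h
  have hk1 : k ≠ 1 := by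
    intro h; apply hv1; have := hkper; rw [h, pow_one] at this; exact this
  have hk2 : k ≠ 2 := by
    intro h; apply hv
    have := hkper; rw [h, pow_succ, pow_one, Equiv.Perm.mul_apply] at this; exact this
  have hk3 : 3 ≤ k := by omega
  -- build the long walk
  have W : ∀ n : ℕ, ∃ w : G.Walk (ψ v) ((ψ ^ (n + 1)) v),
      w.support = (List.range (n + 1)).map (fun i => (ψ ^ (i + 1)) v) ∧ w.length = n := by
    intro n
    induction n with
    | zero =>
      refine ⟨SimpleGraph.Walk.nil.copy (by rw [pow_one]) rfl, ?_, ?_⟩ <;>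
        simp [List.range_succ]
    | succ n ih =>
      obtain ⟨w, hs, hl⟩ := ih
      refine ⟨w.concat (hadj' (n + 1)), ?_, ?_⟩
      · rw [SimpleGraph.Walk.support_concat, hs,
          show List.range (n + 1 + 1) = List.range (n + 1) ++ [n + 1] from List.range_succ]
        simp [List.concat_eq_append]
      · simp [hl]
  obtain ⟨w, hs, hl⟩ := W (k - 2)
  have hk21 : k - 2 + 1 = k - 1 := by omega
  -- extend to a walk back to v
  have hadjlast : G.Adj ((ψ ^ (k - 2 + 1)) v) v := by
    have := hadj' (k - 2 + 1)
    rwa [show k - 2 + 1 + 1 = k from by omega, hkper] at this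
  set w2 : G.Walk (ψ v) v := w.concat hadjlast with hw2
  have hs2 : w2.support = ((List.range (k - 2 + 1)).map (fun i => (ψ ^ (i + 1)) v)).concat v := by
    rw [hw2, SimpleGraph.Walk.support_concat, hs, List.concat_eq_append]
  have hnodup : w2.support.Nodup := by
    rw [hs2, List.concat_eq_append, List.nodup_append]
    refine ⟨?_, List.nodup_singleton v, ?_⟩
    · refine List.Nodup.map_on ?_ List.nodup_range
      intro i hi j hj h
      rw [List.mem_range] at hi hj
      have := hinj (i + 1) (j + 1) (by omega) (by omega) h
      omega
    · intro a ha b hb hab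
      rw [List.mem_singleton] at hb
      subst hb hab
      rw [List.mem_map] at ha
      obtain ⟨i, hi, hiv⟩ := ha
      rw [List.mem_range] at hi
      have : i + 1 = 0 := hinj (i + 1) 0 (by omega) (by omega) (by simpa using hiv)
      omega
  have hpath2 : w2.IsPath := SimpleGraph.Walk.IsPath.mk' hnodup
  set p : G.Walk (ψ v) v := SimpleGraph.Walk.cons (hadj v hv1).symm SimpleGraph.Walk.nil with hp
  have hpathp : p.IsPath := by
    rw [hp]
    simp [SimpleGraph.Walk.isPath_def, hv1]
  have := hG.path_unique ⟨w2, hpath2⟩ ⟨p, hpathp⟩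
  have hweq : w2 = p := Subtype.ext_iff.mp this
  have hlen : w2.length = p.length := congrArg SimpleGraph.Walk.length hweq
  rw [hw2, SimpleGraph.Walk.length_concat, hl, hp] at hlen
  simp at hlen
  omega

end helpers

/-- For a forest `G` and any weight function `f` on permutations, the generalized matrix
function `∑_ψ f(ψ) ∏_v 𝓛^q_{v, ψ(v)}` reduces to a sum over the involutions `ψ` all of
whose 2-cycles are edges of `G`, the term of `ψ` being
`f(ψ) · q^{s(ψ)} · ∏_{ψ(v)=v} (1 + q²(deg(v) − 1))`. -/
theorem gmf_qLap_forest_eq_sum_over_matchings {V : Type} [Fintype V] [DecidableEq V]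
    (G : SimpleGraph V) [DecidableRel G.Adj] (hG : G.IsAcyclic) (q : ℝ)
    (f : Equiv.Perm V → ℂ) :
    ∑ ψ : Equiv.Perm V, f ψ * ∏ v, ((qLap G q v (ψ v) : ℝ) : ℂ)
      = ∑ ψ ∈ Finset.univ.filter
            (fun ψ : Equiv.Perm V => ψ * ψ = 1 ∧ ∀ v, ψ v ≠ v → G.Adj v (ψ v)),
          f ψ * (q : ℂ) ^ (Finset.univ.filter fun v => ψ v ≠ v).card *
            ∏ v ∈ Finset.univ.filter (fun v => ψ v = v),
              (1 + (q : ℂ) ^ 2 * ((G.degree v : ℂ) - 1)) := by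
  rw [← Finset.sum_filter_of_ne (s := Finset.univ)
      (p := fun ψ : Equiv.Perm V => ψ * ψ = 1 ∧ ∀ v, ψ v ≠ v → G.Adj v (ψ v))
      (f := fun ψ => f ψ * ∏ v, ((qLap G q v (ψ v) : ℝ) : ℂ)) ?side]
  · apply Finset.sum_congr rfl
    intro ψ hψ
    rw [Finset.mem_filter] at hψ
    obtain ⟨-, hinv, hadj⟩ := hψ
    have hprod : (∏ v, ((qLap G q v (ψ v) : ℝ) : ℂ))
        = (q : ℂ) ^ (Finset.univ.filter fun v => ψ v ≠ v).card *
          ∏ v ∈ Finset.univ.filter (fun v => ψ v = v),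
            (1 + (q : ℂ) ^ 2 * ((G.degree v : ℂ) - 1)) := by
      rw [← Finset.prod_filter_mul_prod_filter_not Finset.univ (fun v => ψ v ≠ v)
        (fun v => ((qLap G q v (ψ v) : ℝ) : ℂ))]
      have h1 : ∏ v ∈ Finset.univ.filter (fun v => ψ v ≠ v),
          ((qLap G q v (ψ v) : ℝ) : ℂ)
          = (q : ℂ) ^ (Finset.univ.filter fun v => ψ v ≠ v).card := by
        rw [Finset.prod_congr rfl (g := fun _ => (-(q : ℂ)))
          (fun v hv => by
            rw [Finset.mem_filter] at hv
            rw [qLap_offdiag G q (Ne.symm hv.2), if_pos (hadj v hv.2)]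
            push_cast; ring)]
        rw [Finset.prod_const]
        have heven : Even (Finset.univ.filter fun v => ψ v ≠ v).card := by
          have h2 : 2 ∣ ψ.support.card :=
            Equiv.Perm.two_dvd_card_support (by rw [sq]; exact hinv)
          have : ψ.support = Finset.univ.filter fun v => ψ v ≠ v := rfl
          rw [this] at h2
          exact (even_iff_two_dvd).2 h2
        obtain ⟨m, hm⟩ := heven
        rw [hm]
        rw [show m + m = 2 * m by ring, pow_mul, pow_mul]
        norm_num
      have h2 : (Finset.univ.filter fun v => ¬ψ v ≠ v)
          = Finset.univ.filter (fun v => ψ v = v) := by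
        apply Finset.filter_congr; intro v _; simp
      rw [h1, h2]
      congr 1
      apply Finset.prod_congr rfl
      intro v hv
      rw [Finset.mem_filter] at hv
      rw [hv.2, qLap_diag]
      push_cast; ring
    rw [hprod, mul_assoc]
  · intro ψ _ hne
    by_contra hnotM
    apply hne
    have h0 : ∃ v, ψ v ≠ v ∧ ¬ G.Adj v (ψ v) := by
      by_contra h
      push_neg at h
      exact hnotM ⟨forest_invol hG ψ h, h⟩
    obtain ⟨v, hv, hnadj⟩ := h0
    have : ((qLap G q v (ψ v) : ℝ) : ℂ) = 0 := by
      rw [qLap_offdiag G q (Ne.symm hv), if_neg hnadj]; norm_num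
    exact mul_eq_zero_of_right _ (Finset.prod_eq_zero (Finset.mem_univ v) this)
end

section
/- Let G be a simple graph on a finite vertex set V that is acyclic (a forest), let q be a real number, and let 𝓛^q = I + q²(D − I) − qA be its q-Laplacian. If f and g are two functions from the permutations of V to the complex numbers that agree on every involution (i.e., f(ψ) = g(ψ) whenever ψ ∘ ψ = id), then Σ_{ψ ∈ Sym(V)} f(ψ) · ∏_{v ∈ V} 𝓛^q_{v, ψ(v)} = Σ_{ψ ∈ Sym(V)} g(ψ) · ∏_{v ∈ V} 𝓛^q_{v, ψ(v)}. In other words, the generalized matrix function of the q-Laplacian of a forest with respect to a weight function depends only on the values of the weight function at involutions. -/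
open Function

/-- In a forest, a permutation moving each vertex to itself or a neighbor is an involution. -/
lemma forest_perm_involution {V : Type} [Fintype V] [DecidableEq V]
    (G : SimpleGraph V) (hG : G.IsAcyclic) (ψ : Equiv.Perm V)
    (h : ∀ v, v = ψ v ∨ G.Adj v (ψ v)) : ψ * ψ = 1 := by
  by_contra hψ
  obtain ⟨v, hv⟩ : ∃ v, ψ (ψ v) ≠ v := by
    by_contra hc
    push_neg at hc
    exact hψ (Equiv.ext fun x => by simpa using hc x)
  set k := Function.minimalPeriod (⇑ψ) v with hk
  have hper : Function.IsPeriodicPt (⇑ψ) (orderOf ψ) v := by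
    rw [Function.IsPeriodicPt, Function.IsFixedPt, Equiv.Perm.iterate_eq_pow,
      pow_orderOf_eq_one]
    rfl
  have hkpos : 0 < k := hper.minimalPeriod_pos (orderOf_pos ψ)
  have hkiter : (⇑ψ)^[k] v = v := Function.iterate_minimalPeriod
  have hψv : ψ v ≠ v := fun hvv => hv (by rw [hvv, hvv])
  have hk3 : 3 ≤ k := by
    rcases Nat.lt_or_ge k 3 with h3 | h3
    · interval_cases k
      · exact absurd (by simpa using hkiter) hψv
      · exact absurd (by simpa [Function.iterate_succ_apply'] using hkiter) hv
    · exact h3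
  have hinj : ∀ i < k, ∀ j < k, (⇑ψ)^[i] v = (⇑ψ)^[j] v → i = j := fun i hi j hj hij =>
    Function.iterate_injOn_Iio_minimalPeriod hi hj hij
  have hψ2 : ∀ i : ℕ, (⇑ψ)^[i + 2] v ≠ (⇑ψ)^[i] v := by
    intro i hcon
    rw [Function.iterate_add_apply] at hcon
    have := (ψ.injective.iterate i) hcon
    exact hv (by simpa [Function.iterate_succ_apply'] using this)
  have hadj : ∀ i : ℕ, G.Adj ((⇑ψ)^[i] v) ((⇑ψ)^[i + 1] v) := by
    intro i
    rcases h ((⇑ψ)^[i] v) with heq | hA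
    · exfalso
      have h2 : (⇑ψ)^[i + 1] v = (⇑ψ)^[i] v := by
        rw [Function.iterate_succ_apply']; exact heq.symm
      rw [Function.iterate_succ_apply] at h2
      have h3 := (ψ.injective.iterate i) h2
      exact hv (by rw [h3, h3])
    · rw [Function.iterate_succ_apply']
      exact hA
  -- build the walk along the orbit
  have hwalk : ∀ m : ℕ, ∃ W : G.Walk v ((⇑ψ)^[m] v),
      W.edges = (List.range m).map (fun i => s((⇑ψ)^[i] v, (⇑ψ)^[i + 1] v)) ∧
      W.support = (List.range (m + 1)).map (fun i => (⇑ψ)^[i] v) := by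
    intro m
    induction m with
    | zero => exact ⟨SimpleGraph.Walk.nil, by simp, by simp [List.range_succ]⟩
    | succ n ih =>
      obtain ⟨W, he, hs⟩ := ih
      refine ⟨W.concat (hadj n), ?_, ?_⟩
      · rw [SimpleGraph.Walk.edges_concat, he, List.range_succ, List.map_append,
          List.concat_eq_append]
        rfl
      · rw [SimpleGraph.Walk.support_concat, hs, List.range_succ (n := n + 1),
          List.map_append]
        rfl
  obtain ⟨W, he, hs⟩ := hwalk k
  set Wc := W.copy rfl hkiter with hWc
  have hec : Wc.edges = (List.range k).map (fun i => s((⇑ψ)^[i] v, (⇑ψ)^[i + 1] v)) := by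
    rw [hWc, SimpleGraph.Walk.edges_copy, he]
  have hsc : Wc.support = (List.range (k + 1)).map (fun i => (⇑ψ)^[i] v) := by
    rw [hWc, SimpleGraph.Walk.support_copy, hs]
  apply hG Wc
  rw [SimpleGraph.Walk.isCycle_def]
  refine ⟨⟨?_⟩, ?_, ?_⟩
  · -- edges nodup
    rw [hec]
    refine List.Nodup.map_on ?_ List.nodup_range
    intro i hi j hj hij
    rw [List.mem_range] at hi hj
    rw [Sym2.eq_iff] at hij
    rcases hij with ⟨h1, _⟩ | ⟨h1, h2⟩
    · exact hinj i hi j hj h1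
    · exfalso
      apply hψ2 j
      have : (⇑ψ)^[j + 2] v = (⇑ψ)^[i + 1] v := by
        rw [Function.iterate_succ_apply' (n := j + 1), ← h1]
        exact (Function.iterate_succ_apply' (⇑ψ) i v).symm
      rw [this, h2]
  · -- not nil
    intro hnil
    have := congrArg List.length hec
    rw [hnil] at this
    simp at this
    omega
  · -- support tail nodup
    rw [hsc, List.range_succ_eq_map, List.map_cons, List.tail_cons, List.map_map]
    refine List.Nodup.map_on ?_ List.nodup_range
    intro i hi j hj hij
    rw [List.mem_range] at hi hj
    simp only [Function.comp] at hij
    rw [Function.iterate_succ_apply', Function.iterate_succ_apply'] at hij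
    exact hinj i hi j hj (ψ.injective hij)


/-- For a forest `G`, the generalized matrix function of the `q`-Laplacian with respect to
a weight function depends only on the values of the weight function at involutions. -/
theorem gmf_qLap_forest_depends_only_on_involutions {V : Type} [Fintype V] [DecidableEq V]
    (G : SimpleGraph V) [DecidableRel G.Adj] (hG : G.IsAcyclic) (q : ℝ)
    (f g : Equiv.Perm V → ℂ) (hfg : ∀ ψ : Equiv.Perm V, ψ * ψ = 1 → f ψ = g ψ) :
    ∑ ψ : Equiv.Perm V, f ψ * ∏ v, ((qLap G q v (ψ v) : ℝ) : ℂ)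
      = ∑ ψ : Equiv.Perm V, g ψ * ∏ v, ((qLap G q v (ψ v) : ℝ) : ℂ) := by
  refine Finset.sum_congr rfl fun ψ _ => ?_
  by_cases hψ : ψ * ψ = 1
  · rw [hfg ψ hψ]
  · have hex : ∃ v, ¬(v = ψ v ∨ G.Adj v (ψ v)) := by
      by_contra hc
      push_neg at hc
      exact hψ (forest_perm_involution G hG ψ fun v =>
        (hc v).imp id (fun h => h))
    obtain ⟨v, hv⟩ := hex
    push_neg at hv
    have hz : ∏ w, ((qLap G q w (ψ w) : ℝ) : ℂ) = 0 := by
      apply Finset.prod_eq_zero (Finset.mem_univ v)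
      have h0 : qLap G q v (ψ v) = 0 := by
        simp [qLap, Matrix.add_apply, Matrix.sub_apply, Matrix.smul_apply,
          Matrix.one_apply_ne hv.1, SimpleGraph.degMatrix,
          Matrix.diagonal_apply_ne _ hv.1, SimpleGraph.adjMatrix_apply, hv.2]
      rw [h0]
      norm_num
    rw [hz, mul_zero, mul_zero]
end

section
/- Let G be a simple graph on a finite vertex set V that is acyclic (a forest), let q be a real number, and let 𝓛^q = I + q²(D − I) − qA be its q-Laplacian. Let f be a function from the permutations of V to the complex numbers that vanishes on every involution (i.e., f(ψ) = 0 whenever ψ ∘ ψ = id). Form the matrix x·I − 𝓛^q with entries in the polynomial ring ℂ[x]. Then the generalized matrix polynomial Σ_{ψ ∈ Sym(V)} f(ψ) · ∏_{v ∈ V} (x·I − 𝓛^q)_{v, ψ(v)} is the zero polynomial. (This is the mechanism behind the paper's Theorem 1: since the inverse Frobenius image of the monomial symmetric function m_λ vanishes on all involutions when λ is not of the form 2^k 1^{n−2k}, the corresponding generalized matrix polynomial of the q-Laplacian of a tree is identically zero for such λ.) -/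
open Polynomial

/-- Walk along iterates of a function. -/
def iterWalk {V : Type} (G : SimpleGraph V) (g : V → V) (v : V)
    (h : ∀ k : ℕ, G.Adj (g^[k] v) (g^[k+1] v)) : (k : ℕ) → G.Walk v (g^[k] v)
  | 0 => SimpleGraph.Walk.nil
  | k+1 => (iterWalk G g v h k).concat (h k)

lemma iterWalk_support {V : Type} (G : SimpleGraph V) (g : V → V) (v : V)
    (h : ∀ k : ℕ, G.Adj (g^[k] v) (g^[k+1] v)) (k : ℕ) :
    (iterWalk G g v h k).support = (List.range (k+1)).map (fun i => g^[i] v) := by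
  induction k with
  | zero => simp [iterWalk]
  | succ k ih =>
      rw [iterWalk, SimpleGraph.Walk.support_concat, ih]
      conv_rhs => rw [List.range_succ]
      simp only [List.map_append, List.map_cons, List.map_nil, List.concat_eq_append]

lemma iterWalk_length {V : Type} (G : SimpleGraph V) (g : V → V) (v : V)
    (h : ∀ k : ℕ, G.Adj (g^[k] v) (g^[k+1] v)) (k : ℕ) :
    (iterWalk G g v h k).length = k := by
  induction k with
  | zero => rfl
  | succ k ih => rw [iterWalk, SimpleGraph.Walk.length_concat, ih]

lemma invol_of_adj {V : Type} [Fintype V] [DecidableEq V] (G : SimpleGraph V)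
    (hG : G.IsAcyclic) (ψ : Equiv.Perm V)
    (hadj : ∀ w, ψ w ≠ w → G.Adj w (ψ w)) : ψ * ψ = 1 := by
  by_contra h
  obtain ⟨v, hv⟩ : ∃ v, ψ (ψ v) ≠ v := by
    by_contra hc
    push_neg at hc
    exact h (Equiv.ext fun x => by simpa using hc x)
  have hv1 : ψ v ≠ v := fun h' => hv (by rw [h', h'])
  have hmove : ∀ k : ℕ, ψ ((⇑ψ)^[k] v) ≠ (⇑ψ)^[k] v := by
    intro k hk
    have e : (⇑ψ)^[k+1] v = ψ ((⇑ψ)^[k] v) := Function.iterate_succ_apply' _ _ _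
    rw [← e, Function.iterate_succ_apply] at hk
    exact hv1 (ψ.injective.iterate k hk)
  have hper : Function.IsPeriodicPt ψ (orderOf ψ) v := by
    show (⇑ψ)^[orderOf ψ] v = v
    rw [← Equiv.Perm.coe_pow, pow_orderOf_eq_one]; rfl
  set n := Function.minimalPeriod (⇑ψ) v with hn
  have hn0 : 0 < n := hper.minimalPeriod_pos (orderOf_pos ψ)
  have hnv : (⇑ψ)^[n] v = v := Function.iterate_minimalPeriod
  have hn1 : n ≠ 1 := by
    intro h1
    rw [h1] at hnv
    exact hv1 hnv
  have hn2 : n ≠ 2 := by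
    intro h2
    rw [h2] at hnv
    simp [Function.iterate_succ_apply'] at hnv
    exact hv hnv
  have hn3 : 3 ≤ n := by omega
  have hdist : ∀ i j : ℕ, i < j → j < n → (⇑ψ)^[i] v ≠ (⇑ψ)^[j] v := by
    intro i j hij hjn heq
    have : (⇑ψ)^[j - i] v = v := by
      apply (ψ.injective.iterate i)
      rw [← Function.iterate_add_apply]
      rw [show i + (j - i) = j by omega]
      exact heq.symm
    have hp : Function.IsPeriodicPt (⇑ψ) (j - i) v := this
    have := hp.minimalPeriod_le (by omega)
    omega
  have hstep : ∀ k : ℕ, G.Adj ((⇑ψ)^[k] v) ((⇑ψ)^[k+1] v) := by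
    intro k
    rw [Function.iterate_succ_apply']
    exact hadj _ (hmove k)
  -- walk from v to ψ^[n-1] v of length n-1
  have hlast : G.Adj v ((⇑ψ)^[n-1] v) := by
    have := hstep (n-1)
    rw [show n - 1 + 1 = n by omega, hnv] at this
    exact this.symm
  have hp1 : (iterWalk G ψ v hstep (n-1)).IsPath := by
    rw [SimpleGraph.Walk.isPath_def, iterWalk_support]
    rw [show n - 1 + 1 = n by omega]
    refine List.Nodup.map_on ?_ List.nodup_range
    intro i hi j hj hij
    rw [List.mem_range] at hi hj
    by_contra hne
    rcases Nat.lt_or_ge i j with hlt | hge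
    · exact hdist i j hlt hj hij
    · exact hdist j i (by omega) hi hij.symm
  have := hG.path_unique ⟨iterWalk G ψ v hstep (n-1), hp1⟩ (SimpleGraph.Path.singleton hlast)
  have hlen := congrArg (fun p => SimpleGraph.Walk.length p.1) this
  simp only [SimpleGraph.Path.singleton, iterWalk_length] at hlen
  simp [SimpleGraph.Walk.length_cons] at hlen
  omega

lemma entry_eq_zero {V : Type} [Fintype V] [DecidableEq V] (G : SimpleGraph V)
    [DecidableRel G.Adj] (q : ℝ) {w u : V} (hw : w ≠ u) (hnadj : ¬ G.Adj w u) :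
    ((X : ℂ[X]) • (1 : Matrix V V ℂ[X]) -
        (qLap G q).map (fun a => Polynomial.C ((a : ℝ) : ℂ))) w u = 0 := by
  have h1 : qLap G q w u = 0 := by
    simp [qLap, Matrix.add_apply, Matrix.sub_apply, Matrix.one_apply_ne hw,
      SimpleGraph.degMatrix, Matrix.diagonal_apply_ne _ hw, hnadj]
  simp [Matrix.sub_apply, Matrix.smul_apply, Matrix.map_apply, h1,
    Matrix.one_apply_ne hw]

/-- For a forest `G` and a weight function `f` on permutations that vanishes on every
involution, the generalized matrix polynomial
`∑_ψ f(ψ) ∏_v (x·I − 𝓛^q)_{v, ψ(v)}` is the zero polynomial. -/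
theorem gmf_poly_qLap_forest_eq_zero {V : Type} [Fintype V] [DecidableEq V]
    (G : SimpleGraph V) [DecidableRel G.Adj] (hG : G.IsAcyclic) (q : ℝ)
    (f : Equiv.Perm V → ℂ) (hf : ∀ ψ : Equiv.Perm V, ψ * ψ = 1 → f ψ = 0) :
    ∑ ψ : Equiv.Perm V,
        Polynomial.C (f ψ) *
          ∏ v, ((X : ℂ[X]) • (1 : Matrix V V ℂ[X]) -
              (qLap G q).map (fun a => Polynomial.C ((a : ℝ) : ℂ))) v (ψ v) = 0 := by
  apply Finset.sum_eq_zero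
  intro ψ _
  by_cases hinv : ψ * ψ = 1
  · rw [hf ψ hinv]; simp
  · by_cases hall : ∀ w, ψ w ≠ w → G.Adj w (ψ w)
    · exact absurd (invol_of_adj G hG ψ hall) hinv
    · push_neg at hall
      obtain ⟨w, hw, hnadj⟩ := hall
      have h0 : ((X : ℂ[X]) • (1 : Matrix V V ℂ[X]) -
          (qLap G q).map (fun a => Polynomial.C ((a : ℝ) : ℂ))) w (ψ w) = 0 :=
        entry_eq_zero G q (Ne.symm hw) hnadj
      rw [Finset.prod_eq_zero (Finset.mem_univ w) h0, mul_zero]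
end
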